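/- Let d ≥ 1, let Ω ⊆ ℝ^d be a bounded measurable set, let ρ : ℝ^d → ℝ be a nonnegative integrable function, and let dist : ℝ^d × ℝ^d → ℝ be a continuous nonnegative function. Then the K-means functional I(y_1,…,y_K) = ∫_Ω (min_{j=1,…,K} dist(x,y_j))² ρ(x) dx is a continuous function of (y_1,…,y_K) ∈ (ℝ^d)^K. -/
import Mathlib


open MeasureTheory

theorem stmt_9 (d K : ℕ) (hd : 1 ≤ d) (hK : 0 < K)
    (Ω : Set (EuclideanSpace ℝ (Fin d)))
    (hΩb : Bornology.IsBounded Ω) (hΩm : MeasurableSet Ω)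
    (ρ : EuclideanSpace ℝ (Fin d) → ℝ) (hρ0 : ∀ x, 0 ≤ ρ x) (hρi : Integrable ρ)
    (dst : EuclideanSpace ℝ (Fin d) → EuclideanSpace ℝ (Fin d) → ℝ)
    (hdstc : Continuous fun p : EuclideanSpace ℝ (Fin d) × EuclideanSpace ℝ (Fin d) => dst p.1 p.2)
    (hdst0 : ∀ x y, 0 ≤ dst x y) :
    Continuous fun y : Fin K → EuclideanSpace ℝ (Fin d) =>
      ∫ x in Ω, (⨅ j, dst x (y j)) ^ 2 * ρ x := by
  have hne : Nonempty (Fin K) := ⟨⟨0, hK⟩⟩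
  -- rewrite iInf as finset inf'
  have hinf : ∀ (g : Fin K → ℝ), (⨅ j, g j) = Finset.univ.inf' Finset.univ_nonempty g := by
    intro g; rw [Finset.inf'_univ_eq_ciInf]
  rw [continuous_iff_continuousAt]
  intro y0
  obtain ⟨R, hR⟩ := hΩb.subset_closedBall (0 : EuclideanSpace ℝ (Fin d))
  set M : ℝ := (Finset.univ.sup' Finset.univ_nonempty fun j => ‖y0 j‖) + 1 with hM
  have hyM : ∀ y : Fin K → EuclideanSpace ℝ (Fin d), dist y y0 < 1 → ∀ j, ‖y j‖ ≤ M := by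
    intro y hy j
    have h1 : dist (y j) (y0 j) ≤ dist y y0 := dist_le_pi_dist y y0 j
    have h2 : ‖y0 j‖ ≤ Finset.univ.sup' Finset.univ_nonempty fun j => ‖y0 j‖ :=
      Finset.le_sup' (fun k => ‖y0 k‖) (Finset.mem_univ j)
    calc ‖y j‖ ≤ ‖y0 j‖ + dist (y j) (y0 j) := by
          rw [dist_eq_norm]
          calc ‖y j‖ = ‖y0 j + (y j - y0 j)‖ := by congr 1; abel
            _ ≤ ‖y0 j‖ + ‖y j - y0 j‖ := norm_add_le _ _
      _ ≤ M := by rw [hM]; linarith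
  obtain ⟨C, hC⟩ := ((isCompact_closedBall (0 : EuclideanSpace ℝ (Fin d)) R).prod
    (isCompact_closedBall (0 : EuclideanSpace ℝ (Fin d)) M)).exists_bound_of_continuousOn
    hdstc.continuousOn
  set D : ℝ := max C 0 with hD
  apply continuousAt_of_dominated (bound := fun x => D ^ 2 * ρ x)
  · filter_upwards with y
    have hcont : Continuous fun x => (⨅ j, dst x (y j)) ^ 2 := by
      apply Continuous.pow
      simp only [hinf]
      exact Continuous.finset_inf'_apply _ (fun j _ =>
        hdstc.comp (continuous_id.prodMk continuous_const))
    exact hcont.aestronglyMeasurable.mul hρi.aestronglyMeasurable.restrict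
  · filter_upwards [Metric.ball_mem_nhds y0 one_pos] with y hy
    filter_upwards [ae_restrict_mem hΩm] with x hx
    have hxR : x ∈ Metric.closedBall (0 : EuclideanSpace ℝ (Fin d)) R := hR hx
    have hinf0 : 0 ≤ ⨅ j, dst x (y j) := Real.iInf_nonneg fun j => hdst0 _ _
    have hinfC : (⨅ j, dst x (y j)) ≤ D := by
      refine le_trans (ciInf_le (Finite.bddBelow_range _) ⟨0, hK⟩) ?_
      have := hC (x, y ⟨0, hK⟩) ⟨hxR, by
        simpa [Metric.mem_closedBall, dist_zero_right] using hyM y (by simpa using hy) ⟨0, hK⟩⟩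
      refine le_trans ((le_abs_self _).trans (by simpa [Real.norm_eq_abs] using this)) (le_max_left _ _)
    rw [Real.norm_eq_abs, abs_of_nonneg (mul_nonneg (pow_nonneg hinf0 2) (hρ0 x))]
    exact mul_le_mul_of_nonneg_right (pow_le_pow_left₀ hinf0 hinfC 2) (hρ0 x)
  · exact (hρi.restrict.const_mul _)
  · filter_upwards with x
    apply ContinuousAt.mul ?_ continuousAt_const
    apply ContinuousAt.pow
    simp only [hinf]
    exact ContinuousAt.finset_inf'_apply _ fun j _ =>
      (hdstc.comp (continuous_const.prodMk (continuous_apply j))).continuousAt
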